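/- Define y_v = (1/R) Σ_{j=0}^{R−1} y_v(j). Then y_v = (1/R) Σ_{d=0}^{r} g^-_{v,d} for up-agents and y_v = (1/R) Σ_{d=0}^{r} g^+_{v,d} for down-agents; y is a feasible solution; and for every objective k, Σ_{v∈V_k} y_v ≥ (1 − 1/R) min_{v∈V_k} s_v. -/

import Mathlib

open Finset

/-- Averaging the shifted solutions over all shifts `j = 0,…,R−1`:
`y_v = (1/R) Σ_j y_v(j)` equals `(1/R) Σ_{d=0}^r g⁻_{v,d}` for up-agents
(layer `≡ 3 (mod 4)`) and `(1/R) Σ_{d=0}^r g⁺_{v,d}` for down-agents (layer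
`≡ 1 (mod 4)`); `y` is a feasible solution; and for every objective `k`,
`Σ_{v∈V_k} y_v ≥ (1 − 1/R) min_{v∈V_k} s_v`. -/
theorem stmt_13 {V I K : Type*}
    (R r : ℕ) (hR : 2 ≤ R) (hr : r = R - 2)
    (dn up : I → V) (a : I → V → ℝ)
    (layer : V → ℤ)
    (hlayerV : ∀ v, layer v % 4 = 1 ∨ layer v % 4 = 3)
    (Vk : K → Finset V) (hVkne : ∀ k, (Vk k).Nonempty)
    (s : V → ℝ)
    (layerK : K → ℤ) (hlayerK : ∀ k, layerK k % 4 = 0)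
    (gp gm : V → ℕ → ℝ)
    -- the shifted solutions y(j), their decompositions, feasibility
    -- and per-shift objective bounds
    (y : ℕ → V → ℝ)
    (cd : ℕ → V → ℤ) (dd : ℕ → V → ℕ) (ed : ℕ → V → ℤ)
    (hdec : ∀ j < R, ∀ v, layer v = 4 * (R * cd j v + (j : ℤ)) + 4 * dd j v + ed j v ∧
      dd j v ≤ R - 1 ∧ (ed j v = 1 ∨ ed j v = -1))
    (hupdown : ∀ j < R, ∀ v, (ed j v = -1 ↔ layer v % 4 = 3))
    (hy : ∀ j < R, ∀ v, y j v = if dd j v = R - 1 then 0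
      else if ed j v = -1 then gm v (r - dd j v) else gp v (r - dd j v))
    (hfeasj : ∀ j < R, (∀ v, 0 ≤ y j v) ∧
      ∀ i, a i (dn i) * y j (dn i) + a i (up i) * y j (up i) ≤ 1)
    (hobjj : ∀ j < R, ∀ k,
      (layerK k % (4 * R) = (4 * (j : ℤ) - 4) % (4 * R) → ∑ v ∈ Vk k, y j v = 0) ∧
      (layerK k % (4 * R) ≠ (4 * (j : ℤ) - 4) % (4 * R) →
        (Vk k).inf' (hVkne k) s ≤ ∑ v ∈ Vk k, y j v))
    -- the averaged solution
    (Y : V → ℝ)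
    (hY : ∀ v, Y v = (1 / (R : ℝ)) * ∑ j ∈ range R, y j v) :
    (∀ v, layer v % 4 = 3 → Y v = (1 / (R : ℝ)) * ∑ d ∈ range (r + 1), gm v d) ∧
    (∀ v, layer v % 4 = 1 → Y v = (1 / (R : ℝ)) * ∑ d ∈ range (r + 1), gp v d) ∧
    (∀ v, 0 ≤ Y v) ∧
    (∀ i, a i (dn i) * Y (dn i) + a i (up i) * Y (up i) ≤ 1) ∧
    (∀ k, (1 - 1 / (R : ℝ)) * (Vk k).inf' (hVkne k) s ≤ ∑ v ∈ Vk k, Y v) := by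
  have hRpos : (0:ℝ) < R := by
    have : (0:ℕ) < R := by omega
    exact_mod_cast this
  -- injectivity of j ↦ dd j v on range R
  have einj : ∀ v, ∀ j₁ ∈ range R, ∀ j₂ ∈ range R, dd j₁ v = dd j₂ v → j₁ = j₂ := by
    intro v j₁ h₁ j₂ h₂ hdd
    simp only [mem_range] at h₁ h₂
    obtain ⟨hl₁, hd₁, he₁⟩ := hdec j₁ h₁ v
    obtain ⟨hl₂, hd₂, he₂⟩ := hdec j₂ h₂ v
    have hee : ed j₁ v = ed j₂ v := by
      by_cases h3 : layer v % 4 = 3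
      · rw [(hupdown j₁ h₁ v).2 h3, (hupdown j₂ h₂ v).2 h3]
      · rcases he₁ with h | h
        · rcases he₂ with h' | h'
          · rw [h, h']
          · exact absurd ((hupdown j₂ h₂ v).1 h') h3
        · exact absurd ((hupdown j₁ h₁ v).1 h) h3
    have hddZ : (dd j₁ v : ℤ) = (dd j₂ v : ℤ) := by exact_mod_cast hdd
    have hdvd : (R:ℤ) ∣ ((j₁:ℤ) - j₂) := by
      refine ⟨cd j₂ v - cd j₁ v, ?_⟩
      have e1 := hl₁
      have e2 := hl₂
      rw [hddZ, hee] at e1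
      have h4 : 4 * ((j₁:ℤ) - j₂) = 4 * ((R:ℤ) * (cd j₂ v - cd j₁ v)) := by
        linear_combination e2 - e1
      linarith
    have habs : |((j₁:ℤ) - j₂)| < (R:ℤ) := by
      rw [abs_lt]
      constructor <;> [push_cast; push_cast] <;> omega
    have := Int.eq_zero_of_abs_lt_dvd hdvd habs
    omega
  -- key: the sum over shifts of one coordinate
  have key : ∀ (v : V) (g : ℕ → ℝ),
      (∀ j, j < R → y j v = if dd j v = R - 1 then 0 else g (r - dd j v)) →
      ∑ j ∈ range R, y j v = ∑ d ∈ range (r + 1), g d := by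
    intro v g hg
    have himg : (range R).image (fun j => dd j v) = range R := by
      apply Finset.eq_of_subset_of_card_le
      · intro d hd
        simp only [mem_image, mem_range] at hd ⊢
        obtain ⟨j, hj, rfl⟩ := hd
        have := (hdec j hj v).2.1
        omega
      · rw [Finset.card_image_of_injOn fun j₁ h₁ j₂ h₂ h => einj v j₁ h₁ j₂ h₂ h]
    calc ∑ j ∈ range R, y j v
        = ∑ j ∈ range R, (if dd j v = R - 1 then 0 else g (r - dd j v)) :=
          Finset.sum_congr rfl fun j hj => hg j (mem_range.mp hj)
      _ = ∑ d ∈ (range R).image (fun j => dd j v),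
            (if d = R - 1 then 0 else g (r - d)) := by
          rw [Finset.sum_image fun j₁ h₁ j₂ h₂ h => einj v j₁ h₁ j₂ h₂ h]
      _ = ∑ d ∈ range R, (if d = R - 1 then 0 else g (r - d)) := by rw [himg]
      _ = ∑ d ∈ range (r + 1), g (r - d) := by
          rw [show R = (r + 1) + 1 by omega, Finset.sum_range_succ]
          have h1 : (if r + 1 = (r + 1) + 1 - 1 then (0:ℝ) else g (r - (r+1))) = 0 := by
            simp
          rw [h1, add_zero]
          refine Finset.sum_congr rfl fun d hd => ?_
          have : d < r + 1 := mem_range.mp hd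
          rw [if_neg (by omega)]
      _ = ∑ d ∈ range (r + 1), g d := by
          have := Finset.sum_range_reflect g (r + 1)
          simpa using this
  refine ⟨?_, ?_, ?_, ?_, ?_⟩
  · -- up-agents
    intro v h3
    rw [hY v, key v (gm v) ?_]
    intro j hj
    rw [hy j hj v, if_pos ((hupdown j hj v).2 h3)]
  · -- down-agents
    intro v h1
    rw [hY v, key v (gp v) ?_]
    intro j hj
    have hne : ¬ ed j v = -1 := fun h => by
      have := (hupdown j hj v).1 h; omega
    rw [hy j hj v, if_neg hne]
  · -- nonnegativity
    intro v
    rw [hY v]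
    have : 0 ≤ ∑ j ∈ range R, y j v :=
      Finset.sum_nonneg fun j hj => (hfeasj j (mem_range.mp hj)).1 v
    positivity
  · -- feasibility
    intro i
    rw [hY (dn i), hY (up i)]
    have h1 : a i (dn i) * (1 / (R:ℝ) * ∑ j ∈ range R, y j (dn i)) +
        a i (up i) * (1 / (R:ℝ) * ∑ j ∈ range R, y j (up i)) =
        (1 / (R:ℝ)) * ∑ j ∈ range R,
          (a i (dn i) * y j (dn i) + a i (up i) * y j (up i)) := by
      rw [Finset.sum_add_distrib, mul_add, ← Finset.mul_sum, ← Finset.mul_sum]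
      ring
    rw [h1]
    have h2 : ∑ j ∈ range R, (a i (dn i) * y j (dn i) + a i (up i) * y j (up i)) ≤ (R:ℝ) := by
      calc ∑ j ∈ range R, (a i (dn i) * y j (dn i) + a i (up i) * y j (up i))
          ≤ ∑ _j ∈ range R, (1:ℝ) :=
            Finset.sum_le_sum fun j hj => (hfeasj j (mem_range.mp hj)).2 i
        _ = (R:ℝ) := by simp
    calc (1 / (R:ℝ)) * ∑ j ∈ range R, (a i (dn i) * y j (dn i) + a i (up i) * y j (up i))
        ≤ (1 / (R:ℝ)) * R := by
          exact mul_le_mul_of_nonneg_left h2 (by positivity)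
      _ = 1 := by field_simp
  · -- objective
    intro k
    set m := (Vk k).inf' (hVkne k) s with hm
    have hYsum : ∑ v ∈ Vk k, Y v = (1 / (R:ℝ)) * ∑ j ∈ range R, ∑ v ∈ Vk k, y j v := by
      rw [Finset.sum_comm, Finset.mul_sum]
      exact Finset.sum_congr rfl fun v _ => hY v
    have hS0 : ∀ j ∈ range R, 0 ≤ ∑ v ∈ Vk k, y j v := fun j hj =>
      Finset.sum_nonneg fun v _ => (hfeasj j (mem_range.mp hj)).1 v
    by_cases hm0 : m ≤ 0
    · have hpos : 0 ≤ ∑ v ∈ Vk k, Y v := by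
        rw [hYsum]
        have : 0 ≤ ∑ j ∈ range R, ∑ v ∈ Vk k, y j v := Finset.sum_nonneg hS0
        positivity
      have h1R : 0 ≤ 1 - 1 / (R:ℝ) := by
        have : 1 / (R:ℝ) ≤ 1 := by
          rw [div_le_one hRpos]; exact_mod_cast by omega
        linarith
      calc (1 - 1 / (R:ℝ)) * m ≤ 0 := mul_nonpos_of_nonneg_of_nonpos h1R hm0
        _ ≤ _ := hpos
    · push_neg at hm0
      set B := (range R).filter (fun j : ℕ => layerK k % (4 * R) = (4 * (j:ℤ) - 4) % (4 * R))
        with hB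
      have hBcard : B.card ≤ 1 := by
        rw [Finset.card_le_one]
        intro j₁ h₁ j₂ h₂
        simp only [hB, mem_filter, mem_range] at h₁ h₂
        have hmod : (4 * (j₁:ℤ) - 4) % (4 * R) = (4 * (j₂:ℤ) - 4) % (4 * R) :=
          h₁.2 ▸ h₂.2
        have hdvd : (4 * (R:ℤ)) ∣ ((4 * (j₁:ℤ) - 4) - (4 * (j₂:ℤ) - 4)) :=
          Int.ModEq.dvd (Int.ModEq.symm hmod)
        have hdvd' : (R:ℤ) ∣ ((j₁:ℤ) - j₂) := by
          obtain ⟨c, hc⟩ := hdvd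
          exact ⟨c, by linarith⟩
        have habs : |((j₁:ℤ) - j₂)| < (R:ℤ) := by
          rw [abs_lt]
          have hj1 := h₁.1
          have hj2 := h₂.1
          constructor <;> [push_cast; push_cast] <;> omega
        have := Int.eq_zero_of_abs_lt_dvd hdvd' habs
        omega
      have hsub : range R \ B ⊆ range R := Finset.sdiff_subset
      have hlow : ∀ j ∈ range R \ B, m ≤ ∑ v ∈ Vk k, y j v := by
        intro j hj
        rw [Finset.mem_sdiff] at hj
        have hjR := mem_range.mp hj.1
        have hne : layerK k % (4 * R) ≠ (4 * (j:ℤ) - 4) % (4 * R) := by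
          intro h
          exact hj.2 (Finset.mem_filter.mpr ⟨hj.1, h⟩)
        exact (hobjj j hjR k).2 hne
      have hcard : (R : ℝ) - 1 ≤ ((range R \ B).card : ℝ) := by
        have h1 : B ⊆ range R := Finset.filter_subset _ _
        have h2 : (range R \ B).card = R - B.card := by
          rw [Finset.card_sdiff_of_subset h1, Finset.card_range]
        have hBR : B.card ≤ R := le_trans hBcard (by omega)
        rw [h2, Nat.cast_sub hBR]
        have : (B.card : ℝ) ≤ 1 := by exact_mod_cast hBcard
        linarith
      have hsum1 : ((range R \ B).card : ℝ) * m ≤ ∑ j ∈ range R \ B, ∑ v ∈ Vk k, y j v := by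
        calc ((range R \ B).card : ℝ) * m = ∑ _j ∈ range R \ B, m := by
              rw [Finset.sum_const, nsmul_eq_mul]
          _ ≤ _ := Finset.sum_le_sum hlow
      have hsum2 : ∑ j ∈ range R \ B, ∑ v ∈ Vk k, y j v ≤ ∑ j ∈ range R, ∑ v ∈ Vk k, y j v :=
        Finset.sum_le_sum_of_subset_of_nonneg hsub fun j hj _ => hS0 j hj
      have hfin : ((R:ℝ) - 1) * m ≤ ∑ j ∈ range R, ∑ v ∈ Vk k, y j v := by
        have : ((R:ℝ) - 1) * m ≤ ((range R \ B).card : ℝ) * m :=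
          mul_le_mul_of_nonneg_right hcard (le_of_lt hm0)
        linarith
      rw [hYsum]
      have heq : (1 - 1 / (R:ℝ)) * m = (1 / (R:ℝ)) * (((R:ℝ) - 1) * m) := by
        field_simp
      rw [heq]
      exact mul_le_mul_of_nonneg_left hfin (by positivity)
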